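/- Let Λ be a locally finite preordered set and P a commutative ring. A matrix A ∈ M_Λ(P) is invertible if and only if for every s ∈ Λ the finite submatrix of A indexed by the equivalence class [s,s] is invertible as a finite square matrix over P. -/

import Mathlib

open Finset

namespace Stmt8Aux

open scoped Classical

variable {Λ P : Type*} [Preorder Λ] [LocallyFiniteOrder Λ] [DecidableEq Λ] [CommRing P]

def blockOf (A : IncidenceAlgebra P Λ) (s : Λ) :
    Matrix ↥(Finset.Icc s s) ↥(Finset.Icc s s) P :=
  Matrix.of fun t₁ t₂ : ↥(Finset.Icc s s) => A (t₁ : Λ) (t₂ : Λ)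

lemma self_mem_class (s : Λ) : s ∈ Icc s s := mem_Icc.2 ⟨le_rfl, le_rfl⟩

lemma Icc_class {a x : Λ} (hx : x ∈ Icc a a) : Icc x x = Icc a a := by
  obtain ⟨hax, hxa⟩ := mem_Icc.1 hx
  ext y
  simp only [mem_Icc]
  exact ⟨fun ⟨h1, h2⟩ => ⟨hax.trans h1, h2.trans hxa⟩,
    fun ⟨h1, h2⟩ => ⟨hxa.trans h1, h2.trans hax⟩⟩

lemma Icc_class_right {a b x : Λ} (hx : x ∈ Icc a a) : Icc x b = Icc a b := by
  obtain ⟨hax, hxa⟩ := mem_Icc.1 hx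
  ext y
  simp only [mem_Icc]
  exact ⟨fun ⟨h1, h2⟩ => ⟨hax.trans h1, h2⟩, fun ⟨h1, h2⟩ => ⟨hxa.trans h1, h2⟩⟩

lemma filter_class {a b x : Λ} (hx : x ∈ Icc a a) :
    (Icc x b).filter (fun y => ¬ y ≤ x) = (Icc a b).filter (fun y => ¬ y ≤ a) := by
  obtain ⟨hax, hxa⟩ := mem_Icc.1 hx
  rw [Icc_class_right hx]
  refine Finset.filter_congr fun y _ => ?_
  simp only [eq_iff_iff, not_iff_not]
  exact ⟨fun h => h.trans hxa, fun h => h.trans hax⟩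

noncomputable def rinv (A : IncidenceAlgebra P Λ) (N : Λ → Λ → Λ → P) : Λ → Λ → P
  | a, b =>
    if hab : a ≤ b then
      ∑ u ∈ Icc a a,
        N a a u * ((if u = b then (1 : P) else 0) -
          ∑ y ∈ ((Icc a b).filter fun y => ¬ y ≤ a).attach, A u y.1 * rinv A N y.1 b)
    else 0
termination_by a b => (Icc a b).card
decreasing_by
  have hy := y.2
  rw [mem_filter, mem_Icc] at hy
  apply Finset.card_lt_card
  rw [Finset.ssubset_iff_of_subset (Finset.Icc_subset_Icc hy.1.1 le_rfl)]
  exact ⟨a, mem_Icc.2 ⟨le_rfl, hab⟩, fun h => hy.2 (mem_Icc.1 h).1⟩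

lemma rinv_of_not_le (A : IncidenceAlgebra P Λ) (N : Λ → Λ → Λ → P) {a b : Λ}
    (h : ¬ a ≤ b) : rinv A N a b = 0 := by
  rw [rinv]
  exact dif_neg h

lemma rinv_of_le (A : IncidenceAlgebra P Λ) (N : Λ → Λ → Λ → P) {a b : Λ} (hab : a ≤ b) :
    rinv A N a b = ∑ u ∈ Icc a a,
      N a a u * ((if u = b then (1 : P) else 0) -
        ∑ y ∈ (Icc a b).filter fun y => ¬ y ≤ a, A u y * rinv A N y b) := by
  rw [rinv, dif_pos hab]
  refine Finset.sum_congr rfl fun u _ => ?_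
  congr 1
  rw [sub_right_inj]
  exact Finset.sum_attach _ fun y => A u y * rinv A N y b


lemma exists_inv (A : IncidenceAlgebra P Λ) {s : Λ} (hs : IsUnit (blockOf A s)) :
    ∃ N : Λ → Λ → P,
      (∀ x ∈ Icc s s, ∀ z ∈ Icc s s,
        ∑ u ∈ Icc s s, A x u * N u z = if x = z then (1 : P) else 0) ∧
      (∀ x ∈ Icc s s, ∀ z ∈ Icc s s,
        ∑ u ∈ Icc s s, N x u * A u z = if x = z then (1 : P) else 0) := by
  obtain ⟨w, hw⟩ := hs
  refine ⟨fun u z => if h : u ∈ Icc s s ∧ z ∈ Icc s s then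
    (↑w⁻¹ : Matrix ↥(Icc s s) ↥(Icc s s) P) ⟨u, h.1⟩ ⟨z, h.2⟩ else 0, ?_, ?_⟩
  · intro x hx z hz
    have key : (blockOf A s * (↑w⁻¹ : Matrix ↥(Icc s s) ↥(Icc s s) P)) ⟨x, hx⟩ ⟨z, hz⟩
        = (1 : Matrix ↥(Icc s s) ↥(Icc s s) P) ⟨x, hx⟩ ⟨z, hz⟩ := by
      rw [← hw, Units.mul_inv]
    rw [Matrix.mul_apply, Finset.univ_eq_attach, Matrix.one_apply] at key
    have : ∑ u ∈ Icc s s, A x u * (if h : u ∈ Icc s s ∧ z ∈ Icc s s then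
        (↑w⁻¹ : Matrix ↥(Icc s s) ↥(Icc s s) P) ⟨u, h.1⟩ ⟨z, h.2⟩ else 0)
        = ∑ u ∈ (Icc s s).attach, blockOf A s ⟨x, hx⟩ u * (↑w⁻¹ : Matrix ↥(Icc s s) ↥(Icc s s) P) u ⟨z, hz⟩ := by
      rw [← Finset.sum_attach (Icc s s) (fun u => A x u * _)]
      refine Finset.sum_congr rfl fun u _ => ?_
      rw [dif_pos ⟨u.2, hz⟩]
      rfl
    rw [this, key]
    simp [Subtype.ext_iff]
  · intro x hx z hz
    have key : ((↑w⁻¹ : Matrix ↥(Icc s s) ↥(Icc s s) P) * blockOf A s) ⟨x, hx⟩ ⟨z, hz⟩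
        = (1 : Matrix ↥(Icc s s) ↥(Icc s s) P) ⟨x, hx⟩ ⟨z, hz⟩ := by
      rw [← hw, Units.inv_mul]
    rw [Matrix.mul_apply, Finset.univ_eq_attach, Matrix.one_apply] at key
    have : ∑ u ∈ Icc s s, (if h : x ∈ Icc s s ∧ u ∈ Icc s s then
        (↑w⁻¹ : Matrix ↥(Icc s s) ↥(Icc s s) P) ⟨x, h.1⟩ ⟨u, h.2⟩ else 0) * A u z
        = ∑ u ∈ (Icc s s).attach, (↑w⁻¹ : Matrix ↥(Icc s s) ↥(Icc s s) P) ⟨x, hx⟩ u * blockOf A s u ⟨z, hz⟩ := by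
      rw [← Finset.sum_attach (Icc s s) (fun u => _ * A u z)]
      refine Finset.sum_congr rfl fun u _ => ?_
      rw [dif_pos ⟨hx, u.2⟩]
      rfl
    rw [this, key]
    simp [Subtype.ext_iff]


noncomputable def NN (A : IncidenceAlgebra P Λ) (hA : ∀ s, IsUnit (blockOf A s)) :
    Λ → Λ → Λ → P :=
  fun s => (exists_inv A (hA s)).choose

lemma NN_right (A : IncidenceAlgebra P Λ) (hA : ∀ s, IsUnit (blockOf A s)) (s : Λ) :
    ∀ x ∈ Icc s s, ∀ z ∈ Icc s s,
      ∑ u ∈ Icc s s, A x u * NN A hA s u z = if x = z then (1 : P) else 0 :=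
  (exists_inv A (hA s)).choose_spec.1

lemma NN_left (A : IncidenceAlgebra P Λ) (hA : ∀ s, IsUnit (blockOf A s)) (s : Λ) :
    ∀ x ∈ Icc s s, ∀ z ∈ Icc s s,
      ∑ u ∈ Icc s s, NN A hA s x u * A u z = if x = z then (1 : P) else 0 :=
  (exists_inv A (hA s)).choose_spec.2

lemma NN_class (A : IncidenceAlgebra P Λ) (hA : ∀ s, IsUnit (blockOf A s)) {a x : Λ}
    (hx : x ∈ Icc a a) :
    ∀ u ∈ Icc a a, ∀ z ∈ Icc a a, NN A hA x u z = NN A hA a u z := by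
  intro u hu z hz
  have hIcc := Icc_class hx
  have hleft := NN_left A hA x
  rw [hIcc] at hleft
  calc NN A hA x u z
      = ∑ v ∈ Icc a a, NN A hA x u v * (if v = z then (1 : P) else 0) := by
        simp [mul_ite, Finset.sum_ite_eq', hz]
    _ = ∑ v ∈ Icc a a, NN A hA x u v * (∑ w ∈ Icc a a, A v w * NN A hA a w z) := by
        refine Finset.sum_congr rfl fun v hv => ?_
        rw [NN_right A hA a v hv z hz]
    _ = ∑ w ∈ Icc a a, (∑ v ∈ Icc a a, NN A hA x u v * A v w) * NN A hA a w z := by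
        simp_rw [Finset.mul_sum, ← mul_assoc]
        rw [Finset.sum_comm]
        exact Finset.sum_congr rfl fun w _ => (Finset.sum_mul _ _ _).symm
    _ = ∑ w ∈ Icc a a, (if u = w then (1 : P) else 0) * NN A hA a w z := by
        refine Finset.sum_congr rfl fun w hw => ?_
        rw [hleft u hu w hw]
    _ = NN A hA a u z := by
        simp [ite_mul, Finset.sum_ite_eq, hu]

lemma rinv_eq_of_mem (A : IncidenceAlgebra P Λ) (hA : ∀ s, IsUnit (blockOf A s)) {a b x : Λ}
    (hab : a ≤ b) (hx : x ∈ Icc a a) :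
    rinv A (NN A hA) x b = ∑ u ∈ Icc a a, NN A hA a x u * ((if u = b then (1 : P) else 0) -
      ∑ y ∈ (Icc a b).filter fun y => ¬ y ≤ a, A u y * rinv A (NN A hA) y b) := by
  have hxb : x ≤ b := le_trans (mem_Icc.1 hx).2 hab
  rw [rinv_of_le A _ hxb]
  simp only [Icc_class hx, filter_class hx]
  refine Finset.sum_congr rfl fun u hu => ?_
  rw [NN_class A hA hx x hx u hu]


theorem exists_right_inv (A : IncidenceAlgebra P Λ) (hA : ∀ s, IsUnit (blockOf A s)) :
    ∃ B : IncidenceAlgebra P Λ, A * B = 1 := by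
  refine ⟨⟨rinv A (NN A hA), fun a b h => rinv_of_not_le A _ h⟩, ?_⟩
  ext a b hab
  rw [IncidenceAlgebra.mul_apply, IncidenceAlgebra.one_apply]
  simp only [IncidenceAlgebra.coe_mk]
  rw [← Finset.sum_filter_add_sum_filter_not (Icc a b) (fun y => y ≤ a)]
  have h1 : (Icc a b).filter (fun y => y ≤ a) = Icc a a := by
    ext y
    simp only [mem_filter, mem_Icc]
    exact ⟨fun h => ⟨h.1.1, h.2⟩, fun h => ⟨⟨h.1, h.2.trans hab⟩, h.2⟩⟩
  rw [h1]
  have h2 : ∀ x ∈ Icc a a, A a x * rinv A (NN A hA) x b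
      = A a x * ∑ u ∈ Icc a a, NN A hA a x u * ((if u = b then (1 : P) else 0) -
        ∑ y ∈ (Icc a b).filter fun y => ¬ y ≤ a, A u y * rinv A (NN A hA) y b) :=
    fun x hx => by rw [rinv_eq_of_mem A hA hab hx]
  rw [Finset.sum_congr rfl h2]
  simp_rw [Finset.mul_sum]
  rw [Finset.sum_comm]
  have h3 : ∀ u ∈ Icc a a, (∑ x ∈ Icc a a, A a x * (NN A hA a x u *
        ((if u = b then (1 : P) else 0) -
          ∑ y ∈ (Icc a b).filter fun y => ¬ y ≤ a, A u y * rinv A (NN A hA) y b)))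
      = (if a = u then (1 : P) else 0) * ((if u = b then (1 : P) else 0) -
          ∑ y ∈ (Icc a b).filter fun y => ¬ y ≤ a, A u y * rinv A (NN A hA) y b) := by
    intro u hu
    simp_rw [← mul_assoc]
    rw [← Finset.sum_mul, NN_right A hA a a (self_mem_class a) u hu]
  rw [Finset.sum_congr rfl h3]
  simp only [ite_mul, one_mul, zero_mul]
  rw [Finset.sum_ite_eq (Icc a a) a, if_pos (self_mem_class a)]
  ring


lemma block_mul (A B : IncidenceAlgebra P Λ) (s : Λ) :
    blockOf (A * B) s = blockOf A s * blockOf B s := by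
  ext t₁ t₂
  have h12 : Icc (t₁ : Λ) (t₂ : Λ) = Icc s s := by
    obtain ⟨h1, h1'⟩ := mem_Icc.1 t₁.2
    obtain ⟨h2, h2'⟩ := mem_Icc.1 t₂.2
    ext y
    simp only [mem_Icc]
    exact ⟨fun h => ⟨h1.trans h.1, h.2.trans h2'⟩, fun h => ⟨h1'.trans h.1, h.2.trans h2⟩⟩
  calc blockOf (A * B) s t₁ t₂ = ∑ x ∈ Icc (t₁ : Λ) (t₂ : Λ), A t₁ x * B x t₂ :=
        IncidenceAlgebra.mul_apply A B _ _
    _ = ∑ x ∈ Icc s s, A t₁ x * B x t₂ := by rw [h12]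
    _ = ∑ x ∈ (Icc s s).attach, A t₁ x.1 * B x.1 t₂ :=
        (Finset.sum_attach _ fun x => A t₁ x * B x t₂).symm
    _ = (blockOf A s * blockOf B s) t₁ t₂ := by
        rw [Matrix.mul_apply, Finset.univ_eq_attach]
        rfl

lemma block_one (s : Λ) : blockOf (1 : IncidenceAlgebra P Λ) s = 1 := by
  ext t₁ t₂
  show (if (t₁ : Λ) = (t₂ : Λ) then (1 : P) else 0) = _
  rw [Matrix.one_apply]
  by_cases h : t₁ = t₂
  · rw [if_pos h, if_pos (congrArg Subtype.val h)]
  · rw [if_neg h, if_neg (fun h' => h (Subtype.ext h'))]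

theorem main (A : IncidenceAlgebra P Λ) :
    IsUnit A ↔ ∀ s : Λ, IsUnit (blockOf A s) := by
  constructor
  · rintro ⟨u, rfl⟩ s
    refine ⟨⟨blockOf (↑u) s, blockOf (↑u⁻¹) s, ?_, ?_⟩, rfl⟩
    · rw [← block_mul, Units.mul_inv, block_one]
    · rw [← block_mul, Units.inv_mul, block_one]
  · intro hA
    obtain ⟨B, hB⟩ := exists_right_inv A hA
    have hBblocks : ∀ s, IsUnit (blockOf B s) := by
      intro s
      have hmul : blockOf A s * blockOf B s = 1 := by rw [← block_mul, hB, block_one]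
      obtain ⟨x, hx⟩ := hA s
      have : blockOf B s = ↑x⁻¹ := by
        rw [← one_mul (blockOf B s), ← Units.inv_mul x, hx, mul_assoc, hmul, mul_one]
      rw [this]
      exact Units.isUnit _
    obtain ⟨D, hD⟩ := exists_right_inv B hBblocks
    have hAD : A = D := by rw [← mul_one A, ← hD, ← mul_assoc, hB, one_mul]
    exact ⟨⟨A, B, hB, by rw [hAD, hD]⟩, rfl⟩

end Stmt8Aux

/-- For a locally finite preordered set `Λ` and a commutative ring `P`, a matrix
`A ∈ M_Λ(P)` is invertible if and only if, for every `s ∈ Λ`, the finite submatrix of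
`A` indexed by the equivalence class `[s,s] = {t : s ≼ t ∧ t ≼ s}` is invertible as a
finite square matrix over `P`. -/
theorem stmt8 {Λ P : Type*} [Preorder Λ] [LocallyFiniteOrder Λ] [DecidableEq Λ]
    [CommRing P] (A : IncidenceAlgebra P Λ) :
    IsUnit A ↔ ∀ s : Λ,
      IsUnit (Matrix.of fun t₁ t₂ : ↥(Finset.Icc s s) => A (t₁ : Λ) (t₂ : Λ)) :=
  Stmt8Aux.main A
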